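/- Let p be a homogeneous polynomial of degree d in n variables, with p_min = min_{x ∈ Δ_{n−1}} p(x) and p_max = max_{x ∈ Δ_{n−1}} p(x). Then B(p) − p_min ≤ C(2d−1, d) · d^d · ( p_max − p_min ), where C(2d−1,d) is the binomial coefficient. -/

import Mathlib

open Finset MvPolynomial

lemma negpow_sub (a b : ℕ) (hb : b ≤ a) : (-1:ℝ)^(a-b) = (-1:ℝ)^a * (-1:ℝ)^b := by
  have : a - b + 2*b = a + b := by omega
  calc (-1:ℝ)^(a-b) = (-1:ℝ)^(a-b) * ((-1:ℝ)^2)^b := by simp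
    _ = (-1:ℝ)^(a-b+2*b) := by rw [← pow_mul, ← pow_add]
    _ = (-1:ℝ)^(a+b) := by rw [this]
    _ = (-1:ℝ)^a * (-1:ℝ)^b := by rw [pow_add]

lemma uni : ∀ a : ℕ, ∀ g : ℕ, g ≤ a →
    (∑ b ∈ Finset.range (a+1), (-1:ℝ)^(a-b) * (a.choose b) * (b:ℝ)^g)
      = if g = a then (a.factorial : ℝ) else 0 := by
  intro a
  induction a with
  | zero => intro g hg; interval_cases g; simp
  | succ a ih =>
    intro g hg
    match g with
    | 0 =>
      simp only [pow_zero, mul_one]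
      have h : (∑ b ∈ Finset.range (a+2), (-1:ℝ)^(a+1-b) * ((a+1).choose b)) = 0 := by
        have hint := Int.alternating_sum_range_choose (n := a+1)
        rw [if_neg (by omega)] at hint
        have h2 : (∑ b ∈ Finset.range (a+2), (-1:ℝ)^(a+1-b) * ((a+1).choose b))
            = (-1:ℝ)^(a+1) * ∑ b ∈ Finset.range (a+2), (-1:ℝ)^b * ((a+1).choose b) := by
          rw [Finset.mul_sum]
          apply Finset.sum_congr rfl
          intro b hb
          rw [Finset.mem_range] at hb
          rw [negpow_sub _ _ (by omega)]
          ring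
        rw [h2]
        have : (∑ b ∈ Finset.range (a+2), (-1:ℝ)^b * ((a+1).choose b)) = 0 := by
          have := congrArg (fun z : ℤ => (z : ℝ)) hint
          push_cast at this
          convert this using 2
        rw [this, mul_zero]
      rw [h, if_neg (by omega)]
    | g + 1 =>
      rw [Finset.sum_range_succ']
      have hz : (-1:ℝ)^(a+1-0) * (((a+1).choose 0 : ℕ):ℝ) * ((0:ℕ):ℝ)^(g+1) = 0 := by
        simp [zero_pow (Nat.succ_ne_zero g)]
      rw [hz, add_zero]
      have hterm : ∀ c, (-1:ℝ)^(a+1-(c+1)) * (((a+1).choose (c+1) : ℕ):ℝ) * (((c+1 : ℕ)):ℝ)^(g+1)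
          = (a+1) * ∑ j ∈ Finset.range (g+1), (g.choose j) *
              ((-1:ℝ)^(a-c) * (a.choose c) * (c:ℝ)^j) := by
        intro c
        have hch : (((a+1).choose (c+1)) : ℝ) * ((c:ℝ)+1) = (a+1) * (a.choose c) := by
          have h1 := Nat.add_one_mul_choose_eq a c
          have h2 := congrArg (fun z : ℕ => (z : ℝ)) h1
          push_cast at h2
          linarith [h2]
        have hbin : ((c:ℝ)+1)^g = ∑ j ∈ Finset.range (g+1), (c:ℝ)^j * (g.choose j) := by
          have := add_pow (c:ℝ) 1 g
          simpa using this
        have hsub : a + 1 - (c+1) = a - c := by omega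
        rw [hsub]
        push_cast
        calc (-1:ℝ)^(a-c) * (((a+1).choose (c+1)) : ℝ) * ((c:ℝ)+1)^(g+1)
            = ((-1:ℝ)^(a-c)) * ((((a+1).choose (c+1)) : ℝ) * ((c:ℝ)+1)) * ((c:ℝ)+1)^g := by
              ring
          _ = ((-1:ℝ)^(a-c)) * ((a+1) * (a.choose c)) * ((c:ℝ)+1)^g := by rw [hch]
          _ = (a+1) * (((-1:ℝ)^(a-c)) * (a.choose c) * ∑ j ∈ Finset.range (g+1), (c:ℝ)^j * (g.choose j)) := by
              rw [hbin]; ring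
          _ = _ := by
              rw [Finset.mul_sum]
              congr 1
              apply Finset.sum_congr rfl
              intro j hj
              ring
      calc (∑ c ∈ Finset.range (a+1), (-1:ℝ)^(a+1-(c+1)) * (((a+1).choose (c+1) : ℕ):ℝ) * (((c+1:ℕ)):ℝ)^(g+1))
          = ∑ c ∈ Finset.range (a+1), (a+1) * ∑ j ∈ Finset.range (g+1), (g.choose j) *
              ((-1:ℝ)^(a-c) * (a.choose c) * (c:ℝ)^j) := by
            exact Finset.sum_congr rfl fun c _ => hterm c
        _ = (a+1) * ∑ j ∈ Finset.range (g+1), (g.choose j) *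
              (∑ c ∈ Finset.range (a+1), (-1:ℝ)^(a-c) * (a.choose c) * (c:ℝ)^j) := by
            rw [← Finset.mul_sum, Finset.sum_comm]
            congr 1
            apply Finset.sum_congr rfl
            intro j hj
            rw [Finset.mul_sum]
        _ = (a+1) * ∑ j ∈ Finset.range (g+1), (g.choose j) *
              (if j = a then (a.factorial : ℝ) else 0) := by
            congr 1
            apply Finset.sum_congr rfl
            intro j hj
            rw [Finset.mem_range] at hj
            rw [ih j (by omega)]
        _ = (a+1) * ∑ j ∈ Finset.range (g+1), (if j = a then (g.choose j : ℝ) * a.factorial else 0) := by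
            congr 1
            exact Finset.sum_congr rfl fun j _ => by split <;> simp
        _ = (a+1) * (if a ∈ Finset.range (g+1) then (g.choose a : ℝ) * a.factorial else 0) := by
            rw [Finset.sum_ite_eq' (Finset.range (g+1)) a (fun j => (g.choose j : ℝ) * a.factorial)]
        _ = if g + 1 = a + 1 then ((a+1).factorial : ℝ) else 0 := by
            by_cases hga : g + 1 = a + 1
            · have : a ∈ Finset.range (g+1) := by rw [Finset.mem_range]; omega
              rw [if_pos this, if_pos hga]
              have : g = a := by omega
              subst this
              rw [Nat.choose_self, Nat.factorial_succ]
              push_cast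
              ring
            · have : a ∉ Finset.range (g+1) := by rw [Finset.mem_range]; omega
              rw [if_neg this, if_neg hga, mul_zero]

lemma deg_eq {n d : ℕ} {p : MvPolynomial (Fin n) ℝ} (hp : p.IsHomogeneous d)
    {γ : Fin n →₀ ℕ} (hγ : coeff γ p ≠ 0) : ∑ i, γ i = d := by
  have h := hp hγ
  rw [← h, Finsupp.weight_apply, Finsupp.sum_fintype]
  · simp
  · intro i; simp


-- scaling for homogeneous polys
lemma eval_mul_scal {n d : ℕ} {p : MvPolynomial (Fin n) ℝ} (hp : p.IsHomogeneous d)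
    (c : ℝ) (x : Fin n → ℝ) :
    eval (fun i => c * x i) p = c^d * eval x p := by
  rw [eval_eq', eval_eq', Finset.mul_sum]
  apply Finset.sum_congr rfl
  intro γ hγ
  rw [MvPolynomial.mem_support_iff] at hγ
  have hd := deg_eq hp hγ
  have : (∏ i, (c * x i) ^ γ i) = c ^ d * ∏ i, x i ^ γ i := by
    rw [← hd]
    rw [← Finset.prod_pow_eq_pow_sum]
    rw [← Finset.prod_mul_distrib]
    exact Finset.prod_congr rfl fun i _ => mul_pow c (x i) (γ i)
  rw [this]; ring

lemma FD {n d : ℕ} {p : MvPolynomial (Fin n) ℝ} (hp : p.IsHomogeneous d)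
    (α : Fin n →₀ ℕ) (hα : ∑ i, α i = d) :
    ∑ β ∈ Fintype.piFinset (fun i => Finset.range (α i + 1)),
      (-1:ℝ)^(d - ∑ i, β i) * (∏ i, ((α i).choose (β i) : ℝ)) * eval (fun i => (β i : ℝ)) p
    = (∏ i, ((α i).factorial : ℝ)) * coeff α p := by
  set T := Fintype.piFinset (fun i : Fin n => Finset.range (α i + 1)) with hT
  have step1 : ∀ β ∈ T,
      (-1:ℝ)^(d - ∑ i, β i) * (∏ i, ((α i).choose (β i) : ℝ)) * eval (fun i => (β i : ℝ)) p
      = ∑ γ ∈ p.support, coeff γ p *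
          ∏ i, ((-1:ℝ)^(α i - β i) * ((α i).choose (β i) : ℝ) * ((β i : ℝ))^(γ i)) := by
    intro β hβ
    have hβle : ∀ i, β i ≤ α i := by
      intro i
      have := Fintype.mem_piFinset.mp hβ i
      rw [Finset.mem_range] at this; omega
    have hsign : (-1:ℝ)^(d - ∑ i, β i) = ∏ i, (-1:ℝ)^(α i - β i) := by
      rw [Finset.prod_pow_eq_pow_sum]
      congr 1
      rw [Finset.sum_tsub_distrib _ (fun i _ => hβle i), hα]
    rw [hsign, eval_eq', Finset.mul_sum]
    apply Finset.sum_congr rfl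
    intro γ hγ
    rw [Finset.prod_mul_distrib, Finset.prod_mul_distrib]
    ring
  rw [Finset.sum_congr rfl step1, Finset.sum_comm]
  have inner : ∀ γ ∈ p.support,
      (∑ β ∈ T, coeff γ p * ∏ i, ((-1:ℝ)^(α i - β i) * ((α i).choose (β i) : ℝ) * ((β i : ℝ))^(γ i)))
      = if γ = α then (∏ i, ((α i).factorial : ℝ)) * coeff γ p else 0 := by
    intro γ hγ
    rw [MvPolynomial.mem_support_iff] at hγ
    have hγd : ∑ i, γ i = d := deg_eq hp hγ
    rw [← Finset.mul_sum, hT]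
    have hfac := Finset.prod_univ_sum (κ := fun _ : Fin n => ℕ)
      (t := fun i : Fin n => Finset.range (α i + 1))
      (f := fun i b => (-1:ℝ)^(α i - b) * ((α i).choose b : ℝ) * ((b:ℝ))^(γ i))
    rw [← hfac]
    by_cases hcase : γ = α
    · subst hcase
      rw [if_pos rfl]
      have : ∀ i : Fin n, (∑ b ∈ Finset.range (γ i + 1),
          (-1:ℝ)^(γ i - b) * ((γ i).choose b : ℝ) * ((b:ℝ))^(γ i)) = ((γ i).factorial : ℝ) := by
        intro i
        rw [uni (γ i) (γ i) le_rfl, if_pos rfl]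
      rw [Finset.prod_congr rfl (fun i _ => this i)]
      ring
    · rw [if_neg hcase]
      have hex : ∃ i, γ i < α i := by
        by_contra hno
        push_neg at hno
        have heq : ∀ i ∈ Finset.univ, α i = γ i := by
          rw [← Finset.sum_eq_sum_iff_of_le (fun i _ => hno i)]
          rw [hα, hγd]
        exact hcase (Finsupp.ext fun i => (heq i (Finset.mem_univ i)).symm)
      obtain ⟨i₀, hi₀⟩ := hex
      rw [Finset.prod_eq_zero (Finset.mem_univ i₀), mul_zero]
      rw [uni (α i₀) (γ i₀) (le_of_lt hi₀), if_neg (by omega)]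
  rw [Finset.sum_congr rfl inner, Finset.sum_ite_eq' p.support α
    (fun γ => (∏ i, ((α i).factorial : ℝ)) * coeff γ p)]
  by_cases hmem : α ∈ p.support
  · rw [if_pos hmem]
  · rw [if_neg hmem]
    rw [MvPolynomial.notMem_support_iff] at hmem
    rw [hmem, mul_zero]

lemma coeff_sumX_pow {n d : ℕ} (α : Fin n →₀ ℕ) (hα : ∑ i, α i = d) :
    (∏ i, ((α i).factorial : ℝ)) * coeff α ((∑ i, X i : MvPolynomial (Fin n) ℝ)^d)
      = (d.factorial : ℝ) := by
  rw [Finset.sum_pow_eq_sum_piAntidiag]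
  rw [MvPolynomial.coeff_sum]
  have hterm : ∀ k ∈ Finset.piAntidiag Finset.univ d,
      coeff α ((Nat.multinomial Finset.univ k : MvPolynomial (Fin n) ℝ) * ∏ i, X i ^ k i)
      = if k = ⇑α then (Nat.multinomial Finset.univ k : ℝ) else 0 := by
    intro k hk
    have hmono : (∏ i, (X i : MvPolynomial (Fin n) ℝ) ^ k i)
        = monomial (Finsupp.equivFunOnFinite.symm k) 1 := by
      rw [← MvPolynomial.prod_X_pow_eq_monomial]
      rw [← Finset.prod_subset (Finset.subset_univ (Finsupp.equivFunOnFinite.symm k).support)]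
      · apply Finset.prod_congr rfl
        intro i _
        rfl
      · intro i _ hi
        rw [Finsupp.notMem_support_iff] at hi
        rw [show (Finsupp.equivFunOnFinite.symm k) i = k i from rfl] at hi
        rw [hi, pow_zero]
    rw [hmono]
    rw [show ((Nat.multinomial Finset.univ k : ℕ) : MvPolynomial (Fin n) ℝ)
      = C ((Nat.multinomial Finset.univ k : ℕ) : ℝ) by push_cast; rfl]
    rw [coeff_C_mul, coeff_monomial]
    by_cases hkα : k = ⇑α
    · rw [if_pos hkα, if_pos (by rw [hkα]; exact Finsupp.equivFunOnFinite_symm_coe α), mul_one]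
    · rw [if_neg hkα, if_neg, mul_zero]
      intro hc
      apply hkα
      have := congrArg (fun f => Finsupp.equivFunOnFinite f) hc
      have h' : k = Finsupp.equivFunOnFinite α := by simpa using this
      exact h'
  rw [Finset.sum_congr rfl hterm]
  rw [Finset.sum_ite_eq' (Finset.piAntidiag Finset.univ d) (⇑α)
    (fun k => (Nat.multinomial Finset.univ k : ℝ))]
  rw [if_pos (by rw [Finset.mem_piAntidiag]; exact ⟨hα, fun i _ => Finset.mem_univ i⟩)]
  have := Nat.multinomial_spec Finset.univ ⇑α
  rw [hα] at this
  have := congrArg (fun z : ℕ => (z : ℝ)) this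
  push_cast at this
  rw [← this]

lemma key_nat_ineq : ∀ e : ℕ, 2^(e+1) ≤ (e+1).factorial * (2*e+1).choose (e+1) + 1 := by
  intro e
  induction e with
  | zero => decide
  | succ e ih =>
    have h1 : (2*(e+1)+1).choose (e+2) ≥ (2*(e+1)).choose (e+1) := by
      rw [show 2*(e+1)+1 = (2*(e+1))+1 from rfl, Nat.choose_succ_succ]
      simp only [Nat.succ_eq_add_one]
      omega
    have h2 : (2*(e+1)).choose (e+1) ≥ (2*e+1).choose (e+1) + 1 := by
      rw [show 2*(e+1) = (2*e+1)+1 by ring, Nat.choose_succ_succ]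
      simp only [Nat.succ_eq_add_one]
      have : (2*e+1).choose e ≥ 1 := Nat.choose_pos (by omega)
      omega
    have h5 : (2*(e+1)+1).choose (e+2) ≥ (2*e+1).choose (e+1) + 1 := le_trans h2 h1
    have h3 : (e+2).factorial = (e+2) * (e+1).factorial := rfl
    have h4 : (e+1).factorial ≥ 1 := Nat.factorial_pos _
    calc 2^(e+2) = 2*2^(e+1) := by ring
      _ ≤ 2*((e+1).factorial * (2*e+1).choose (e+1) + 1) := by omega
      _ = 2*(e+1).factorial * (2*e+1).choose (e+1) + 2 := by ring
      _ ≤ 2*(e+1).factorial * (2*e+1).choose (e+1) + 2*(e+1).factorial := by omega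
      _ = (2*(e+1).factorial) * ((2*e+1).choose (e+1) + 1) := by ring
      _ ≤ ((e+2)*(e+1).factorial) * ((2*(e+1)+1).choose (e+2)) :=
          Nat.mul_le_mul (by nlinarith) h5
      _ = (e+2).factorial * (2*(e+1)+1).choose (e+2) := by rw [h3]
      _ ≤ (e+2).factorial * (2*(e+1)+1).choose (e+2) + 1 := by omega

lemma sum_choose_T {n d : ℕ} (α : Fin n →₀ ℕ) (hα : ∑ i, α i = d) :
    ∑ β ∈ Fintype.piFinset (fun i => Finset.range (α i + 1)),
      (∏ i, ((α i).choose (β i) : ℝ)) = 2^d := by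
  have hfac := Finset.prod_univ_sum (κ := fun _ : Fin n => ℕ)
    (t := fun i : Fin n => Finset.range (α i + 1))
    (f := fun i b => (((α i).choose b : ℕ) : ℝ))
  rw [← hfac]
  have : ∀ i : Fin n, (∑ b ∈ Finset.range (α i + 1), (((α i).choose b : ℕ):ℝ)) = 2^(α i) := by
    intro i
    have := Nat.sum_range_choose (α i)
    have := congrArg (fun z : ℕ => (z : ℝ)) this
    push_cast at this
    rw [this]
  rw [Finset.prod_congr rfl (fun i _ => this i), Finset.prod_pow_eq_pow_sum, hα]

noncomputable def Bcoef {n : ℕ} (d : ℕ) (p : MvPolynomial (Fin n) ℝ) : ℝ :=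
  sSup {c : ℝ | ∃ α : Fin n →₀ ℕ, (∑ i, α i) = d ∧
    c = ((∏ i, Nat.factorial (α i) : ℕ) : ℝ) / (Nat.factorial d : ℝ) * coeff α p}

/-- **Theorem (bound on `B(p) - p_min` over the simplex).**
For a homogeneous polynomial `p` of degree `d` with minimum `p_min` and maximum `p_max`
over the simplex, `B(p) - p_min ≤ C(2d-1,d)·d^d·(p_max - p_min)`. -/
theorem Bcoef_sub_min_le
    {n d : ℕ} (hn : 0 < n)
    (p : MvPolynomial (Fin n) ℝ) (hp : p.IsHomogeneous d)
    (Δ : Set (Fin n → ℝ)) (hΔ : Δ = {x : Fin n → ℝ | (∀ i, 0 ≤ x i) ∧ ∑ i, x i = 1})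
    (pmin pmax : ℝ)
    (hpmin : pmin = sInf ((fun x => eval x p) '' Δ))
    (hpmax : pmax = sSup ((fun x => eval x p) '' Δ)) :
    Bcoef d p - pmin ≤ ((2 * d - 1).choose d : ℝ) * (d : ℝ) ^ d * (pmax - pmin) := by
  have hΔs : Δ = stdSimplex ℝ (Fin n) := hΔ
  have hcont : Continuous fun x : Fin n → ℝ => eval x p := MvPolynomial.continuous_eval p
  have hK : IsCompact ((fun x => eval x p) '' Δ) := by
    rw [hΔs]; exact (isCompact_stdSimplex _ _).image hcont
  have hΔne : Δ.Nonempty := by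
    rw [hΔs]; exact ⟨_, ite_eq_mem_stdSimplex ℝ (⟨0, hn⟩ : Fin n)⟩
  have hKne : ((fun x => eval x p) '' Δ).Nonempty := hΔne.image _
  have hmem_le : ∀ x ∈ Δ, pmin ≤ eval x p := fun x hx =>
    hpmin ▸ csInf_le hK.bddBelow ⟨x, hx, rfl⟩
  have hmem_ge : ∀ x ∈ Δ, eval x p ≤ pmax := fun x hx =>
    hpmax ▸ le_csSup hK.bddAbove ⟨x, hx, rfl⟩
  have hminmax : pmin ≤ pmax := by
    obtain ⟨x, hx⟩ := hΔne
    exact le_trans (hmem_le x hx) (hmem_ge x hx)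
  rcases Nat.eq_zero_or_pos d with hd0 | hd
  · subst hd0
    have hconst : ∀ x : Fin n → ℝ, eval x p = coeff 0 p := by
      intro x
      have h := eval_mul_scal hp 0 x
      rw [pow_zero, one_mul] at h
      rw [show (fun i => (0:ℝ) * x i) = (fun _ : Fin n => (0:ℝ)) by funext i; ring] at h
      rw [← h, eval_zero', constantCoeff_eq]
    have hBco : Bcoef 0 p = coeff 0 p := by
      unfold Bcoef
      have hset : {c : ℝ | ∃ α : Fin n →₀ ℕ, (∑ i, α i) = 0 ∧
          c = ((∏ i, Nat.factorial (α i) : ℕ) : ℝ) / (Nat.factorial 0 : ℝ) * coeff α p}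
          = {coeff 0 p} := by
        ext c
        constructor
        · rintro ⟨α, hs, rfl⟩
          have hα0 : α = 0 := by
            ext i
            exact (Finset.sum_eq_zero_iff.mp hs) i (Finset.mem_univ i)
          subst hα0
          simp [Nat.factorial]
        · intro hc
          rw [Set.mem_singleton_iff] at hc
          exact ⟨0, by simp, by simp [hc, Nat.factorial]⟩
      rw [hset, csSup_singleton]
    have hpm : pmin = coeff 0 p := by
      obtain ⟨x, hx⟩ := hΔne
      have h1 : pmin ≤ coeff 0 p := hconst x ▸ hmem_le x hx
      have h2 : coeff 0 p ≤ pmin := by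
        rw [hpmin]
        apply le_csInf hKne
        rintro y ⟨z, hz, rfl⟩
        exact le_of_eq (hconst z).symm
      linarith
    rw [hBco, hpm]
    simp only [Nat.mul_zero, Nat.zero_sub, Nat.choose_self, Nat.cast_one, pow_zero, sub_self]
    nlinarith
  · rw [sub_le_iff_le_add]
    unfold Bcoef
    apply csSup_le
    · refine ⟨_, ⟨Finsupp.single (⟨0, hn⟩ : Fin n) d, ?_, rfl⟩⟩
      simp [Finsupp.single_apply]
    rintro c ⟨α, hα, rfl⟩
    set T := Fintype.piFinset (fun i : Fin n => Finset.range (α i + 1)) with hT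
    set M : ℝ := (d:ℝ)^d * (pmax - pmin) with hM
    have hMnn : 0 ≤ M := mul_nonneg (by positivity) (by linarith)
    have hA := FD hp α hα
    have hp0 : ((∑ i, X i : MvPolynomial (Fin n) ℝ)^d).IsHomogeneous d := by
      have h1 : (∑ i, X i : MvPolynomial (Fin n) ℝ).IsHomogeneous 1 :=
        IsHomogeneous.sum Finset.univ _ 1 (fun i _ => isHomogeneous_X ℝ i)
      simpa using h1.pow d
    have hB := FD hp0 α hα
    rw [coeff_sumX_pow α hα] at hB
    have hBeval : ∀ β : Fin n → ℕ,
        eval (fun i => (β i : ℝ)) ((∑ i, X i : MvPolynomial (Fin n) ℝ)^d)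
          = ((∑ i, β i : ℕ) : ℝ)^d := by
      intro β
      rw [map_pow]
      congr 1
      push_cast
      simp
    rw [Finset.sum_congr rfl (fun β _ => by rw [hBeval β])] at hB
    -- split the difference
    have hsplit : (∏ i, ((α i).factorial : ℝ)) * coeff α p - (d.factorial : ℝ) * pmin
        = ∑ β ∈ T, ((-1:ℝ)^(d - ∑ i, β i) * (∏ i, ((α i).choose (β i) : ℝ)) *
            (eval (fun i => (β i : ℝ)) p - pmin * ((∑ i, β i : ℕ) : ℝ)^d)) := by
      have hexp : ∀ β ∈ T, ((-1:ℝ)^(d - ∑ i, β i) * (∏ i, ((α i).choose (β i) : ℝ)) *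
            (eval (fun i => (β i : ℝ)) p - pmin * ((∑ i, β i : ℕ) : ℝ)^d))
          = (-1:ℝ)^(d - ∑ i, β i) * (∏ i, ((α i).choose (β i) : ℝ)) * eval (fun i => (β i : ℝ)) p
            - pmin * ((-1:ℝ)^(d - ∑ i, β i) * (∏ i, ((α i).choose (β i) : ℝ)) * ((∑ i, β i : ℕ) : ℝ)^d) := by
        intro β _; ring
      rw [Finset.sum_congr rfl hexp, Finset.sum_sub_distrib, ← Finset.mul_sum, hA, hB]
      ring
    -- per-term bound
    have hper : ∀ β ∈ T, ((-1:ℝ)^(d - ∑ i, β i) * (∏ i, ((α i).choose (β i) : ℝ)) *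
          (eval (fun i => (β i : ℝ)) p - pmin * ((∑ i, β i : ℕ) : ℝ)^d))
        ≤ (if β = 0 then 0 else (∏ i, ((α i).choose (β i) : ℝ)) * M) := by
      intro β hβ
      have hβle : ∀ i, β i ≤ α i := by
        intro i
        have := Fintype.mem_piFinset.mp hβ i
        rw [Finset.mem_range] at this; omega
      have hSle : (∑ i, β i) ≤ d := by
        rw [← hα]; exact Finset.sum_le_sum (fun i _ => hβle i)
      by_cases hβ0 : β = 0
      · subst hβ0
        rw [if_pos rfl]
        have h1 : (fun i : Fin n => (((0:Fin n → ℕ) i : ℕ) : ℝ)) = (fun _ : Fin n => (0:ℝ)) := by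
          funext i; simp
        have h2 : eval (fun i : Fin n => (((0:Fin n → ℕ) i : ℕ) : ℝ)) p = 0 := by
          rw [h1, eval_zero', constantCoeff_eq]
          apply hp.coeff_eq_zero
          have : (0 : Fin n →₀ ℕ).degree = 0 := by simp [Finsupp.degree]
          omega
        rw [h2]
        have h3 : ((∑ i, (0:Fin n → ℕ) i : ℕ) : ℝ) = 0 := by simp
        rw [h3, zero_pow (by omega : d ≠ 0)]
        simp
      · rw [if_neg hβ0]
        have hS1 : 0 < ∑ i, β i := by
          rcases Nat.eq_zero_or_pos (∑ i, β i) with h | h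
          · exfalso
            apply hβ0
            funext i
            exact (Finset.sum_eq_zero_iff.mp h) i (Finset.mem_univ i)
          · exact h
        set s : ℝ := ((∑ i, β i : ℕ) : ℝ) with hs
        have hspos : (0:ℝ) < s := by
          rw [hs]; exact_mod_cast hS1
        set x : Fin n → ℝ := fun i => (β i : ℝ) / s with hx
        have hsum : (∑ i, (β i:ℝ)) = s := by rw [hs]; push_cast; rfl
        have hxΔ : x ∈ Δ := by
          rw [hΔ]
          refine ⟨fun i => div_nonneg (Nat.cast_nonneg _) hspos.le, ?_⟩
          show (∑ i, (β i : ℝ) / s) = 1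
          rw [← Finset.sum_div, hsum, div_self hspos.ne']
        have hval : eval (fun i => (β i : ℝ)) p = s^d * eval x p := by
          have hfun : (fun i => (β i : ℝ)) = (fun i => s * x i) := by
            funext i
            rw [hx]
            field_simp
          rw [hfun, eval_mul_scal hp s x]
        set v : ℝ := eval x p with hv
        have hv1 : pmin ≤ v := hmem_le x hxΔ
        have hv2 : v ≤ pmax := hmem_ge x hxΔ
        have hCnn : (0:ℝ) ≤ ∏ i, ((α i).choose (β i) : ℝ) :=
          Finset.prod_nonneg (fun i _ => Nat.cast_nonneg _)
        have hY : (0:ℝ) ≤ (∏ i, ((α i).choose (β i) : ℝ)) * s^d * (v - pmin) := by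
          apply mul_nonneg (mul_nonneg hCnn (by positivity))
          linarith
        have heq1 : ((-1:ℝ)^(d - ∑ i, β i) * (∏ i, ((α i).choose (β i) : ℝ)) *
              (eval (fun i => (β i : ℝ)) p - pmin * s^d))
            = (-1:ℝ)^(d - ∑ i, β i) * ((∏ i, ((α i).choose (β i) : ℝ)) * s^d * (v - pmin)) := by
          rw [hval]; ring
        rw [heq1]
        have hsignle : (-1:ℝ)^(d - ∑ i, β i) ≤ 1 := by
          rcases neg_one_pow_eq_or ℝ (d - ∑ i, β i) with h | h <;> rw [h] <;> norm_num
        calc (-1:ℝ)^(d - ∑ i, β i) * ((∏ i, ((α i).choose (β i) : ℝ)) * s^d * (v - pmin))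
            ≤ (∏ i, ((α i).choose (β i) : ℝ)) * s^d * (v - pmin) := by
              nlinarith
          _ ≤ (∏ i, ((α i).choose (β i) : ℝ)) * M := by
              rw [hM]
              have hsd : s^d ≤ (d:ℝ)^d := by
                apply pow_le_pow_left₀ hspos.le
                rw [hs]; exact_mod_cast hSle
              have h1 : s^d * (v - pmin) ≤ (d:ℝ)^d * (pmax - pmin) := by
                apply mul_le_mul hsd (by linarith) (by linarith) (by positivity)
              calc (∏ i, ((α i).choose (β i) : ℝ)) * s^d * (v - pmin)
                  = (∏ i, ((α i).choose (β i) : ℝ)) * (s^d * (v - pmin)) := by ring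
                _ ≤ (∏ i, ((α i).choose (β i) : ℝ)) * ((d:ℝ)^d * (pmax - pmin)) :=
                    mul_le_mul_of_nonneg_left h1 hCnn
    -- sum of the bounds
    have hsumbound : ∑ β ∈ T, (if β = 0 then 0 else (∏ i, ((α i).choose (β i) : ℝ)) * M)
        = ((2:ℝ)^d - 1) * M := by
      have hsplit2 : ∀ β ∈ T, (if β = 0 then (0:ℝ) else (∏ i, ((α i).choose (β i) : ℝ)) * M)
          = (∏ i, ((α i).choose (β i) : ℝ)) * M
            - (if β = 0 then (∏ i, ((α i).choose (β i) : ℝ)) * M else 0) := by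
        intro β _
        split <;> ring
      rw [Finset.sum_congr rfl hsplit2, Finset.sum_sub_distrib]
      rw [Finset.sum_ite_eq' T (0 : Fin n → ℕ)
        (fun β => (∏ i, ((α i).choose (β i) : ℝ)) * M)]
      have h0T : (0 : Fin n → ℕ) ∈ T := by
        rw [hT, Fintype.mem_piFinset]
        intro i
        simp
      rw [if_pos h0T, ← Finset.sum_mul, sum_choose_T α hα]
      simp only [Pi.zero_apply, Nat.choose_zero_right, Nat.cast_one, Finset.prod_const_one]
      ring
    have hfinal : (∏ i, ((α i).factorial : ℝ)) * coeff α p - (d.factorial : ℝ) * pmin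
        ≤ ((2:ℝ)^d - 1) * M := by
      rw [hsplit, ← hsumbound]
      exact Finset.sum_le_sum hper
    -- key combinatorial inequality
    have hkey : ((2:ℝ)^d - 1) ≤ (d.factorial : ℝ) * ((2*d-1).choose d : ℝ) := by
      obtain ⟨e, rfl⟩ : ∃ e, d = e + 1 := ⟨d - 1, by omega⟩
      have h := key_nat_ineq e
      have h2 : 2*(e+1)-1 = 2*e+1 := by omega
      rw [h2]
      have h3 : ((2:ℝ))^(e+1) ≤ ((e+1).factorial : ℝ) * (((2*e+1).choose (e+1) : ℕ) : ℝ) + 1 := by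
        exact_mod_cast h
      push_cast at h3 ⊢
      linarith
    -- finish
    have hdfpos : (0:ℝ) < (d.factorial : ℝ) := by exact_mod_cast Nat.factorial_pos d
    rw [div_mul_eq_mul_div, div_le_iff₀ hdfpos]
    push_cast
    have h2 : ((2:ℝ)^d - 1) * M ≤ ((d.factorial : ℝ) * ((2*d-1).choose d : ℝ)) * M :=
      mul_le_mul_of_nonneg_right hkey hMnn
    rw [hM] at hfinal h2
    nlinarith [hfinal, h2]
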